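/- Let p be an odd prime and let t be a rational number whose numerator and denominator are both coprime to p. Then Σ_{k=0}^{(p-3)/2} (binom(2k,k)/(2k+1)²)·(t/4)^{2k} ≡ (−1)^{(p-1)/2}·(v_p(t) − t^p)/(t·p²) + (2/(t·p))·Σ_{k=0}^{(p-3)/2} (−1)^k·v_{2k+1}(t)/(2k+1) (mod p²). -/

import Mathlib

/-- `x ≡ y (mod p^m)` for rationals: the `p`-adic valuation of `x - y` is at least `m`
(with the convention that `x = y` always satisfies the congruence). -/
def pcong (p m : ℕ) (x y : ℚ) : Prop := x = y ∨ (m : ℤ) ≤ padicValRat p (x - y)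

/-- Lucas sequence `v_n(x)`: `v_0 = 2`, `v_1 = x`, `v_n = x v_{n-1} - v_{n-2}`. -/
def lucasV (x : ℚ) : ℕ → ℚ
  | 0 => 2
  | 1 => x
  | n + 2 => x * lucasV x (n + 1) - lucasV x n

open Nat Finset

/-- coefficient of `t^(2d+1)` in `lucasV t (2k+1)` (for `d ≤ k`; 0 for `d > k`). -/
noncomputable def ee (k d : ℕ) : ℚ :=
  if k < d then 0 else
    (-1)^(k+d) * (2*k+1) / (k+d+1) * ((k+d+1).choose (k-d))

lemma lucasV_two_add (x : ℚ) (n : ℕ) :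
    lucasV x (n+2) = x * lucasV x (n+1) - lucasV x n := rfl

lemma lucasV_odd_rec (x : ℚ) (k : ℕ) :
    lucasV x (2*(k+2)+1) = (x^2-2) * lucasV x (2*(k+1)+1) - lucasV x (2*k+1) := by
  have h1 : 2*(k+2)+1 = (2*k+3)+2 := by ring
  have h2 : 2*(k+1)+1 = (2*k+1)+2 := by ring
  have h3 : 2*k+3 = (2*k+1)+2 := by ring
  have h4 : 2*k+2 = (2*k)+2 := by ring
  rw [h1, h2, lucasV_two_add, lucasV_two_add]
  have h5 : lucasV x (2*k+3) = x * lucasV x (2*k+2) - lucasV x (2*k+1) := by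
    rw [h3]; exact lucasV_two_add x (2*k+1)
  have h6 : lucasV x (2*k+2) = x * lucasV x (2*k+1) - lucasV x (2*k) := by
    rw [h4]; exact lucasV_two_add x (2*k)
  have h3' : (2*k+1)+2 = 2*k+3 := by ring
  rw [h3', h5, h6]
  ring

lemma prod_modeq (s : Finset ℕ) (f g : ℕ → ℤ) (n : ℤ) (h : ∀ i ∈ s, f i ≡ g i [ZMOD n]) :
    (∏ i ∈ s, f i) ≡ ∏ i ∈ s, g i [ZMOD n] := by
  classical
  induction s using Finset.induction with
  | empty => rfl
  | @insert a s' hx ih =>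
    rw [Finset.prod_insert hx, Finset.prod_insert hx]
    exact (h a (Finset.mem_insert_self a s')).mul
      (ih fun i hi => h i (Finset.mem_insert_of_mem hi))


lemma neg_one_pow_two_mul_add (m n : ℕ) : (-1 : ℚ)^(2*m+n) = (-1)^n := by
  rw [pow_add, pow_mul, neg_one_sq, one_pow, one_mul]

lemma ee_of_le {k d : ℕ} (h : d ≤ k) :
    ee k d = (-1)^(k+d) * (2*(k:ℚ)+1) / (k+d+1) * ((k+d+1).choose (k-d)) := by
  rw [ee, if_neg (by omega)]

lemma ee_of_lt {k d : ℕ} (h : k < d) : ee k d = 0 := by rw [ee, if_pos h]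

lemma ee_self (k : ℕ) : ee k k = 1 := by
  rw [ee_of_le le_rfl]
  have h1 : k - k = 0 := Nat.sub_self k
  have h2 : (-1:ℚ)^(k+k) = 1 := by
    rw [show k+k = 2*k+0 by ring, neg_one_pow_two_mul_add, pow_zero]
  rw [h1, h2, Nat.choose_zero_right]
  have h3 : ((k:ℚ)+k+1) ≠ 0 := by positivity
  push_cast
  field_simp
  ring

lemma ee_zero_right (j : ℕ) : ee j 0 = (-1)^j * (2*(j:ℚ)+1) := by
  rw [ee_of_le (Nat.zero_le j)]
  have h1 : (j+0+1).choose (j-0) = j+1 := by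
    rw [Nat.add_zero, Nat.sub_zero, ← Nat.choose_symm (by omega),
        show j+1-j = 1 by omega, Nat.choose_one_right]
  rw [h1, Nat.add_zero]
  have h3 : ((j:ℚ)+1) ≠ 0 := by positivity
  push_cast
  field_simp
  ring

lemma cast_choose' (n r : ℕ) (h : r ≤ n) (m : ℕ) (hm : n - r = m) :
    ((n.choose r : ℚ)) = (n ! : ℚ) / ((r ! : ℚ) * (m ! : ℚ)) := by
  subst hm; exact Nat.cast_choose ℚ h

set_option maxHeartbeats 2000000 in
lemma choose_cubic_id (e a : ℕ) :
    ((2*(e:ℚ)+2*a+7)) * ((2*e+a+5).choose (a+2)) / (2*e+a+5)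
      = (2*(e:ℚ)+2*a+5) * ((2*e+a+3).choose (a+2)) / (2*e+a+3)
        + 2 * (2*(e:ℚ)+2*a+5) * ((2*e+a+4).choose (a+1)) / (2*e+a+4)
        - (2*(e:ℚ)+2*a+3) * ((2*e+a+3).choose a) / (2*e+a+3) := by
  rw [cast_choose' (2*e+a+5) (a+2) (by omega) (2*e+3) (by omega),
      cast_choose' (2*e+a+3) (a+2) (by omega) (2*e+1) (by omega),
      cast_choose' (2*e+a+4) (a+1) (by omega) (2*e+3) (by omega),
      cast_choose' (2*e+a+3) a (by omega) (2*e+3) (by omega)]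
  have f1 : (2*e+a+5)! = (2*e+a+5) * ((2*e+a+4) * (2*e+a+3)!) := by
    rw [show 2*e+a+5 = (2*e+a+4)+1 by omega, Nat.factorial_succ,
        show 2*e+a+4 = (2*e+a+3)+1 by omega, Nat.factorial_succ]
  have f2 : (2*e+a+4)! = (2*e+a+4) * (2*e+a+3)! := by
    rw [show 2*e+a+4 = (2*e+a+3)+1 by omega, Nat.factorial_succ]
  have f3 : (a+2)! = (a+2) * ((a+1) * a !) := by
    rw [Nat.factorial_succ, Nat.factorial_succ]
  have f4 : (2*e+3)! = (2*e+3) * ((2*e+2) * (2*e+1)!) := by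
    rw [show 2*e+3 = (2*e+2)+1 by omega, Nat.factorial_succ,
        show 2*e+2 = (2*e+1)+1 by omega, Nat.factorial_succ]
  have f5 : (a+1)! = (a+1) * a ! := Nat.factorial_succ a
  rw [f1, f2, f3, f4, f5]
  have h1 : ((2*e+a+3)! : ℚ) ≠ 0 := by exact_mod_cast Nat.factorial_ne_zero _
  have h2 : ((2*e+1)! : ℚ) ≠ 0 := by exact_mod_cast Nat.factorial_ne_zero _
  have h3 : ((a)! : ℚ) ≠ 0 := by exact_mod_cast Nat.factorial_ne_zero _
  have h4 : ((2*(e:ℚ)+a+5)) ≠ 0 := by positivity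
  have h5 : ((2*(e:ℚ)+a+4)) ≠ 0 := by positivity
  have h6 : ((2*(e:ℚ)+a+3)) ≠ 0 := by positivity
  have h7 : ((a:ℚ)+2) ≠ 0 := by positivity
  have h8 : ((a:ℚ)+1) ≠ 0 := by positivity
  have h9 : (2*(e:ℚ)+3) ≠ 0 := by positivity
  have h10 : (2*(e:ℚ)+2) ≠ 0 := by positivity
  push_cast
  field_simp
  ring

lemma ee_rec (k d : ℕ) :
    ee (k+2) d = (if d = 0 then 0 else ee (k+1) (d-1)) - 2 * ee (k+1) d - ee k d := by
  rcases Nat.eq_zero_or_pos d with hd0 | hd1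
  · subst hd0
    rw [if_pos rfl, ee_zero_right, ee_zero_right, ee_zero_right,
        pow_succ, pow_succ]
    push_cast
    ring
  rcases Nat.lt_or_ge k d with hkd | hdk
  · rcases Nat.lt_or_ge (k+1) d with hk1 | hk1'
    · rcases Nat.lt_or_ge (k+2) d with hk2 | hk2'
      · rw [ee_of_lt hk2, ee_of_lt hk1, ee_of_lt hkd, ee_of_lt (by omega),
            if_neg (by omega)]
        ring
      · have : d = k+2 := by omega
        subst this
        rw [ee_self, if_neg (by omega), show k+2-1 = k+1 by omega, ee_self,
            ee_of_lt (by omega), ee_of_lt (by omega)]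
        ring
    · have : d = k+1 := by omega
      subst this
      rw [if_neg (by omega), show k+1-1 = k by omega,
          ee_of_lt (show k < k+1 by omega), ee_self,
          ee_of_le (show k ≤ k+1 by omega),
          ee_of_le (show k+1 ≤ k+2 by omega)]
      rw [show k+2+(k+1)+1 = 2*k+4 by omega, show k+2-(k+1) = 1 by omega,
          show k+1+k+1 = 2*k+2 by omega, show k+1-k = 1 by omega,
          Nat.choose_one_right, Nat.choose_one_right,
          show k+2+(k+1) = 2*(k+1)+1 by omega, neg_one_pow_two_mul_add,
          show k+1+k = 2*k+1 by omega, neg_one_pow_two_mul_add]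
      have c1 : (2*(k:ℚ)+4) ≠ 0 := by positivity
      have c2 : (2*(k:ℚ)+2) ≠ 0 := by positivity
      push_cast
      field_simp
      ring
  · -- 1 ≤ d ≤ k : generic case
    obtain ⟨e, rfl⟩ : ∃ e, d = e+1 := ⟨d-1, by omega⟩
    obtain ⟨a, rfl⟩ : ∃ a, k = e+1+a := ⟨k-(e+1), by omega⟩
    rw [if_neg (by omega), show e+1-1 = e by omega,
        ee_of_le (show e+1 ≤ e+1+a+2 by omega),
        ee_of_le (show e ≤ e+1+a+1 by omega),
        ee_of_le (show e+1 ≤ e+1+a+1 by omega),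
        ee_of_le (show e+1 ≤ e+1+a by omega)]
    rw [show e+1+a+2+(e+1)+1 = 2*e+a+5 by omega,
        show e+1+a+2-(e+1) = a+2 by omega,
        show e+1+a+1+e+1 = 2*e+a+3 by omega,
        show e+1+a+1-e = a+2 by omega,
        show e+1+a+1+(e+1)+1 = 2*e+a+4 by omega,
        show e+1+a+1-(e+1) = a+1 by omega,
        show e+1+a+(e+1)+1 = 2*e+a+3 by omega,
        show e+1+a-(e+1) = a by omega,
        show e+1+a+2+(e+1) = 2*(e+2)+a by omega, neg_one_pow_two_mul_add,
        show e+1+a+1+e = 2*(e+1)+a by omega, neg_one_pow_two_mul_add,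
        show e+1+a+1+(e+1) = 2*(e+1)+(a+1) by omega, neg_one_pow_two_mul_add,
        show e+1+a+(e+1) = 2*(e+1)+a by omega, neg_one_pow_two_mul_add]
    have key := choose_cubic_id e a
    have hs : ((-1:ℚ)^(a+1)) = -(-1)^a := by rw [pow_succ]; ring
    rw [hs]
    push_cast
    linear_combination ((-1:ℚ)^a) * key

lemma lucasV_odd (t : ℚ) : ∀ k, lucasV t (2*k+1) = ∑ d ∈ range (k+1), ee k d * t^(2*d+1) := by
  intro k
  induction k using Nat.strong_induction_on with
  | _ k ih =>
    match k with
    | 0 => simp [lucasV, Finset.sum_range_one, ee_self]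
    | 1 =>
      rw [show 2*1+1 = 1+2 by norm_num, lucasV_two_add,
          show (1:ℕ)+1 = 0+2 by norm_num, lucasV_two_add]
      simp only [Finset.sum_range_succ, Finset.sum_range_one, ee_self,
        ee_zero_right]
      show t * (t * t - 2) - t = _
      push_cast
      ring
    | (k+2) =>
      have ih1 := ih k (by omega)
      have ih2 := ih (k+1) (by omega)
      rw [lucasV_odd_rec, ih1, ih2]
      have step : ∀ d ∈ range (k+3), ee (k+2) d * t^(2*d+1) =
          ((if d = 0 then 0 else ee (k+1) (d-1)) * t^(2*d+1))
          - 2 * (ee (k+1) d * t^(2*d+1)) - ee k d * t^(2*d+1) := by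
        intro d _
        rw [ee_rec]
        ring
      rw [show k+2+1 = k+3 by omega, Finset.sum_congr rfl step]
      rw [Finset.sum_sub_distrib, Finset.sum_sub_distrib]
      have e1 : ∑ d ∈ range (k+3), (if d = 0 then (0:ℚ) else ee (k+1) (d-1)) * t^(2*d+1)
          = t^2 * ∑ d ∈ range (k+2), ee (k+1) d * t^(2*d+1) := by
        rw [Finset.sum_range_succ' (fun d => (if d = 0 then (0:ℚ) else ee (k+1) (d-1)) * t^(2*d+1)) (k+2)]
        simp only [Nat.succ_ne_zero, if_false, reduceIte, Nat.add_sub_cancel,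
          zero_mul, add_zero]
        rw [Finset.mul_sum]
        refine Finset.sum_congr rfl fun d _ => ?_
        ring
      have e2 : ∑ d ∈ range (k+3), 2 * (ee (k+1) d * t^(2*d+1))
          = 2 * ∑ d ∈ range (k+2), ee (k+1) d * t^(2*d+1) := by
        rw [Finset.sum_range_succ, ee_of_lt (by omega), Finset.mul_sum]
        simp
      have e3 : ∑ d ∈ range (k+3), ee k d * t^(2*d+1)
          = ∑ d ∈ range (k+1), ee k d * t^(2*d+1) := by
        rw [Finset.sum_range_succ, Finset.sum_range_succ,
            ee_of_lt (by omega), ee_of_lt (by omega)]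
        simp
      rw [e1, e2, e3]
      ring

lemma Pj (b : ℕ) : ∀ j : ℕ, 2 * ∑ i ∈ range j, (((b+1+i).choose i : ℚ))/((b:ℚ)+1+i)
    = ((b:ℚ)+1+2*j) * (((b+j).choose j : ℚ)) / ((b:ℚ)+1)^2
      - (((b+1+j).choose j : ℚ))/((b:ℚ)+1+j) := by
  intro j
  induction j with
  | zero =>
    simp only [Finset.sum_range_zero, mul_zero, Nat.add_zero, Nat.choose_zero_right]
    have : ((b:ℚ)+1) ≠ 0 := by positivity
    push_cast
    field_simp
    ring
  | succ j IH =>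
    rw [Finset.sum_range_succ, mul_add, IH]
    have hb1 : ((b:ℚ)+1) ≠ 0 := by positivity
    have hj1 : ((j:ℚ)+1) ≠ 0 := by positivity
    have hbj1 : ((b:ℚ)+j+1) ≠ 0 := by positivity
    have hbj2 : ((b:ℚ)+j+2) ≠ 0 := by positivity
    -- r1 : (b+j+1) choose facts
    have r1 : (((b+j+1).choose (j+1) : ℚ)) * (j+1) = (((b+j).choose j : ℚ)) * ((b:ℚ)+j+1) := by
      have := Nat.add_one_mul_choose_eq (b+j) j
      have h := congrArg (fun n : ℕ => (n : ℚ)) this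
      push_cast at h
      linarith [h]
    have r2 : (((b+j+1).choose j : ℚ)) * ((b:ℚ)+1) = (((b+j+1).choose (j+1) : ℚ)) * ((j:ℚ)+1) := by
      have := Nat.choose_succ_right_eq (b+j+1) j
      rw [show b+j+1-j = b+1 by omega] at this
      have h := congrArg (fun n : ℕ => (n : ℚ)) this
      push_cast at h
      linarith [h]
    have r3 : (((b+j+2).choose (j+1) : ℚ)) * ((j:ℚ)+1) = (((b+j+1).choose j : ℚ)) * ((b:ℚ)+j+2) := by
      have := Nat.add_one_mul_choose_eq (b+j+1) j
      have h := congrArg (fun n : ℕ => (n : ℚ)) this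
      push_cast at h
      linarith [h]
    have hZ : (((b+j+1).choose (j+1) : ℚ)) = (((b+j).choose j : ℚ)) * ((b:ℚ)+j+1)/((j:ℚ)+1) := by
      rw [eq_div_iff hj1]; linarith [r1]
    have hY : (((b+j+1).choose j : ℚ)) = (((b+j).choose j : ℚ)) * ((b:ℚ)+j+1)/((b:ℚ)+1) := by
      rw [eq_div_iff hb1]
      rw [hZ] at r2
      field_simp at r2
      linarith [r2]
    have hW : (((b+j+2).choose (j+1) : ℚ)) = (((b+j).choose j : ℚ)) * ((b:ℚ)+j+1)*((b:ℚ)+j+2)/(((b:ℚ)+1)*((j:ℚ)+1)) := by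
      rw [eq_div_iff (by positivity)]
      rw [hY] at r3
      field_simp at r3
      linarith [r3]
    rw [show b+1+(j+1) = b+j+2 by omega, show b+(j+1) = b+j+1 by omega,
        show b+1+j = b+j+1 by omega]
    rw [hZ, hY, hW]
    push_cast
    field_simp
    ring

lemma identityI (m : ℕ) (t : ℚ) :
    (2*(m:ℚ)+1)^2 * ∑ k ∈ range m, (-1)^k * ((m+k).choose (2*k) : ℚ) * t^(2*k+1) / (2*(k:ℚ)+1)^2
      + (-1)^m * t^(2*m+1)
      - 2*(2*(m:ℚ)+1) * ∑ k ∈ range m, (-1)^k * lucasV t (2*k+1) / (2*(k:ℚ)+1)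
    = (-1)^m * lucasV t (2*m+1) := by
  have h3 : ∀ k ∈ range m, (-1:ℚ)^k * lucasV t (2*k+1) / (2*(k:ℚ)+1)
      = ∑ d ∈ range (k+1), (-1:ℚ)^k * (ee k d * t^(2*d+1)) / (2*(k:ℚ)+1) := by
    intro k _
    rw [lucasV_odd, Finset.mul_sum, Finset.sum_div]
  rw [Finset.sum_congr rfl h3]
  have hswap : ∑ k ∈ range m, ∑ d ∈ range (k+1), (-1:ℚ)^k * (ee k d * t^(2*d+1)) / (2*(k:ℚ)+1)
      = ∑ d ∈ range m, ∑ k ∈ Ico d m, (-1:ℚ)^k * (ee k d * t^(2*d+1)) / (2*(k:ℚ)+1) := by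
    refine Finset.sum_comm' ?_
    intro k d
    simp only [Finset.mem_range, Finset.mem_Ico]
    omega
  rw [hswap]
  rw [lucasV_odd t m, Finset.sum_range_succ, ee_self, one_mul, mul_add]
  have main : ∀ d ∈ range m,
      (2*(m:ℚ)+1)^2 * ((-1)^d * ((m+d).choose (2*d) : ℚ) * t^(2*d+1) / (2*(d:ℚ)+1)^2)
        - 2*(2*(m:ℚ)+1) * ∑ k ∈ Ico d m, (-1:ℚ)^k * (ee k d * t^(2*d+1)) / (2*(k:ℚ)+1)
      = (-1:ℚ)^m * (ee m d * t^(2*d+1)) := by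
    intro d hd
    simp only [Finset.mem_range] at hd
    obtain ⟨j, rfl⟩ : ∃ j, m = d+j+1 := ⟨m-d-1, by omega⟩
    rw [Finset.sum_Ico_eq_sum_range, show d+j+1-d = j+1 by omega]
    have hin : ∀ i ∈ range (j+1), (-1:ℚ)^(d+i) * (ee (d+i) d * t^(2*d+1)) / (2*(↑(d+i):ℚ)+1)
        = ((-1:ℚ)^d * t^(2*d+1)) * ((((2*d+1+i).choose i : ℚ))/(((2*d:ℕ):ℚ)+1+i)) := by
      intro i _
      rw [ee_of_le (show d ≤ d+i by omega), show d+i+d = 2*d+i by omega,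
          show d+i-d = i by omega, neg_one_pow_two_mul_add,
          show 2*d+i+1 = 2*d+1+i by omega, pow_add]
      have hne : (2*((d:ℚ)+i)+1) ≠ 0 := by positivity
      have hne2 : ((d:ℚ)+i+d+1) ≠ 0 := by positivity
      rcases Nat.even_or_odd i with hpar | hpar
      · rw [hpar.neg_one_pow]
        push_cast at hne hne2 ⊢
        field_simp
        ring
      · rw [hpar.neg_one_pow]
        push_cast at hne hne2 ⊢
        field_simp
        ring
    rw [Finset.sum_congr rfl hin, ← Finset.mul_sum]
    have hsymm : (d+j+1+d).choose (2*d) = (2*d+(j+1)).choose (j+1) := by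
      rw [show d+j+1+d = 2*d+(j+1) by omega,
          ← Nat.choose_symm (show j+1 ≤ 2*d+(j+1) by omega),
          show 2*d+(j+1)-(j+1) = 2*d by omega]
    rw [hsymm]
    have hRHS : (-1:ℚ)^(d+j+1) * (ee (d+j+1) d * t^(2*d+1))
        = (-1:ℚ)^d * (2*(d:ℚ)+2*j+3) * (((2*d+1+(j+1)).choose (j+1) : ℚ))
            / ((2*(d:ℚ)+j+2)) * t^(2*d+1) := by
      rw [ee_of_le (show d ≤ d+j+1 by omega), show d+j+1+d = 2*d+(j+1) by omega,
          show d+j+1-d = j+1 by omega, neg_one_pow_two_mul_add,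
          show 2*d+(j+1)+1 = 2*d+1+(j+1) by omega,
          show d+j+1 = d+(j+1) by omega, pow_add]
      have hne : ((d:ℚ)+j+1+d+1) ≠ 0 := by positivity
      rcases Nat.even_or_odd (j+1) with hpar | hpar
      · rw [hpar.neg_one_pow]
        push_cast at hne ⊢
        field_simp
        ring
      · rw [hpar.neg_one_pow]
        push_cast at hne ⊢
        field_simp
        ring
    rw [hRHS]
    have PP := Pj (2*d) (j+1)
    rw [show 2*d+(j+1) = 2*d+j+1 by omega, show 2*d+1+(j+1) = 2*d+1+j+1 by omega] at PP
    rw [show (2*d+(j+1)).choose (j+1) = (2*d+j+1).choose (j+1) by norm_num [Nat.add_assoc],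
        show (2*d+1+(j+1)).choose (j+1) = (2*d+1+j+1).choose (j+1) by norm_num [Nat.add_assoc]]
    push_cast at PP ⊢
    linear_combination (-((-1:ℚ)^d * t^(2*d+1) * (2*(d:ℚ)+2*(j:ℚ)+3))) * PP
  have main2 := Finset.sum_congr rfl main
  rw [Finset.sum_sub_distrib, ← Finset.mul_sum, ← Finset.mul_sum, ← Finset.mul_sum] at main2
  linarith [main2]

lemma choose_prod (m : ℕ) : ∀ k, k ≤ m →
    ((m+k).choose (2*k) : ℚ) * 4^k * (2*k)! = ∏ i ∈ range k, ((2*(m:ℚ)+1)^2 - (2*(i:ℚ)+1)^2) := by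
  intro k
  induction k with
  | zero => simp
  | succ k IH =>
    intro hk
    obtain ⟨s, rfl⟩ : ∃ s, m = k+1+s := ⟨m-k-1, by omega⟩
    have e := IH (by omega)
    rw [Finset.prod_range_succ, ← e]
    rw [cast_choose' (k+1+s+(k+1)) (2*(k+1)) (by omega) s (by omega),
        cast_choose' (k+1+s+k) (2*k) (by omega) (s+1) (by omega)]
    have f1 : (k+1+s+(k+1))! = (k+1+s+(k+1)) * (k+1+s+k)! := by
      rw [show k+1+s+(k+1) = (k+1+s+k)+1 by omega, Nat.factorial_succ]
    have f2 : (2*(k+1))! = (2*k+2) * ((2*k+1) * (2*k)!) := by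
      rw [show 2*(k+1) = (2*k+1)+1 by omega, Nat.factorial_succ,
          show 2*k+1 = (2*k)+1 by omega, Nat.factorial_succ]
    have f3 : (s+1)! = (s+1) * s ! := Nat.factorial_succ s
    rw [f1, f2, f3]
    have h1 : ((k+1+s+k)! : ℚ) ≠ 0 := by exact_mod_cast Nat.factorial_ne_zero _
    have h2 : ((2*k)! : ℚ) ≠ 0 := by exact_mod_cast Nat.factorial_ne_zero _
    have h3 : ((s)! : ℚ) ≠ 0 := by exact_mod_cast Nat.factorial_ne_zero _
    have h4 : (2*(k:ℚ)+2) ≠ 0 := by positivity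
    have h5 : (2*(k:ℚ)+1) ≠ 0 := by positivity
    have h6 : ((s:ℚ)+1) ≠ 0 := by positivity
    push_cast
    field_simp
    ring

lemma oddprod : ∀ k : ℕ, (∏ i ∈ range k, (2*(i:ℚ)+1)) * 2^k * k ! = (2*k)! := by
  intro k
  induction k with
  | zero => simp
  | succ k IH =>
    rw [Finset.prod_range_succ]
    have f2 : (2*(k+1))! = (2*k+2) * ((2*k+1) * (2*k)!) := by
      rw [show 2*(k+1) = (2*k+1)+1 by omega, Nat.factorial_succ,
          show 2*k+1 = (2*k)+1 by omega, Nat.factorial_succ]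
    rw [f2, Nat.factorial_succ]
    push_cast
    linear_combination (2*(k:ℚ)+2) * (2*(k:ℚ)+1) * IH

lemma central_fact (k : ℕ) : ((2*k).choose k : ℚ) * (k ! * k !) = (2*k)! := by
  have := Nat.choose_mul_factorial_mul_factorial (show k ≤ 2*k by omega)
  rw [show 2*k-k = k by omega] at this
  have := congrArg (fun n : ℕ => (n:ℚ)) this
  push_cast at this
  linarith [this]

lemma coeff_diff (m k : ℕ) (hk : k < m) :
    ∃ z : ℤ, ((2*k).choose k : ℚ)/16^k - (-1)^k * ((m+k).choose (2*k) : ℚ)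
      = (z:ℚ) * (2*(m:ℚ)+1)^2 / (4^k * (2*k)!) := by
  -- p² divides the difference of the integer products
  have hdvd : ((2*m+1:ℤ)^2) ∣ ((∏ i ∈ range k, ((2*i+1:ℤ)^2 - (2*m+1)^2))
      - ∏ i ∈ range k, (2*i+1:ℤ)^2) := by
    have hmod : (∏ i ∈ range k, ((2*i+1:ℤ)^2 - (2*m+1)^2))
        ≡ ∏ i ∈ range k, (2*i+1:ℤ)^2 [ZMOD ((2*m+1:ℤ)^2)] := by
      refine prod_modeq _ _ _ _ fun i _ => ?_
      have : ((2*m+1:ℤ)^2) ∣ ((2*i+1:ℤ)^2 - ((2*i+1:ℤ)^2 - (2*m+1)^2)) := ⟨1, by ring⟩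
      exact (Int.ModEq.symm (Int.modEq_iff_dvd.mpr (by simpa using this)))
    exact (Int.ModEq.dvd hmod.symm)
  obtain ⟨z, hz⟩ := hdvd
  refine ⟨-z, ?_⟩
  -- cast hz to ℚ
  have hzQ : (∏ i ∈ range k, ((2*(i:ℚ)+1)^2 - (2*(m:ℚ)+1)^2))
      - ∏ i ∈ range k, (2*(i:ℚ)+1)^2 = (2*(m:ℚ)+1)^2 * (z:ℚ) := by
    exact_mod_cast congrArg (fun n : ℤ => (n:ℚ)) hz
  have h1 := choose_prod m k (le_of_lt hk)
  have h2 : (∏ i ∈ range k, ((2*(m:ℚ)+1)^2 - (2*(i:ℚ)+1)^2))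
      = (-1)^k * ∏ i ∈ range k, ((2*(i:ℚ)+1)^2 - (2*(m:ℚ)+1)^2) := by
    have hc : ∀ i ∈ range k, ((2*(m:ℚ)+1)^2 - (2*(i:ℚ)+1)^2)
        = (-1) * ((2*(i:ℚ)+1)^2 - (2*(m:ℚ)+1)^2) := fun i _ => by ring
    rw [Finset.prod_congr rfl hc, Finset.prod_mul_distrib, Finset.prod_const,
        Finset.card_range]
  have h4 : (∏ i ∈ range k, (2*(i:ℚ)+1)^2) * (4^k : ℚ) * (k ! * k !) = ((2*k)! : ℚ) * (2*k)! := by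
    have := oddprod k
    calc (∏ i ∈ range k, (2*(i:ℚ)+1)^2) * (4^k : ℚ) * (k ! * k !)
        = ((∏ i ∈ range k, (2*(i:ℚ)+1)) * 2^k * k !) * ((∏ i ∈ range k, (2*(i:ℚ)+1)) * 2^k * k !) := by
          rw [Finset.prod_pow, show (4:ℚ)^k = 2^k * 2^k by rw [← mul_pow]; norm_num]
          push_cast
          ring
      _ = ((2*k)! : ℚ) * (2*k)! := by rw [this]
  have h5 := central_fact k
  -- now pure field algebra
  have n1 : ((2*k)! : ℚ) ≠ 0 := by exact_mod_cast Nat.factorial_ne_zero _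
  have n2 : ((k)! : ℚ) ≠ 0 := by exact_mod_cast Nat.factorial_ne_zero _
  have n3 : (4:ℚ)^k ≠ 0 := by positivity
  have n4 : (16:ℚ)^k ≠ 0 := by positivity
  have h16 : (16:ℚ)^k = 4^k * 4^k := by rw [show (16:ℚ) = 4*4 by norm_num, mul_pow]
  rw [h2] at h1
  rcases Nat.even_or_odd k with hpar | hpar
  · rw [hpar.neg_one_pow] at h1 ⊢
    rw [one_mul] at h1 ⊢
    have main2 : (((2*k).choose k : ℚ) * (2*k)! - ((m+k).choose (2*k) : ℚ) * ((4:ℚ)^k)^2 * (2*k)!) * ((k ! : ℚ))^2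
        = ((-z:ℤ):ℚ) * (2*(m:ℚ)+1)^2 * (4:ℚ)^k * ((k ! : ℚ))^2 := by
      push_cast
      linear_combination (-(4:ℚ)^k*((k ! : ℚ))^2) * h1 + (-(4:ℚ)^k*((k ! : ℚ))^2) * hzQ
        + (((2*k)! : ℚ)) * h5 + (-1) * h4
    have main' := mul_right_cancel₀ (pow_ne_zero 2 n2) main2
    calc ((2*k).choose k : ℚ)/16^k - ((m+k).choose (2*k) : ℚ)
        = (((2*k).choose k : ℚ) * (2*k)! - ((m+k).choose (2*k) : ℚ) * ((4:ℚ)^k)^2 * (2*k)!) / (((4:ℚ)^k)^2 * (2*k)!) := by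
          rw [h16]
          field_simp
      _ = (((-z:ℤ):ℚ) * (2*(m:ℚ)+1)^2 * (4:ℚ)^k) / (((4:ℚ)^k)^2 * (2*k)!) := by rw [main']
      _ = ((-z:ℤ):ℚ) * (2*(m:ℚ)+1)^2 / (4^k * (2*k)!) := by
          field_simp
  · rw [hpar.neg_one_pow] at h1 ⊢
    have main2 : (((2*k).choose k : ℚ) * (2*k)! + ((m+k).choose (2*k) : ℚ) * ((4:ℚ)^k)^2 * (2*k)!) * ((k ! : ℚ))^2
        = ((-z:ℤ):ℚ) * (2*(m:ℚ)+1)^2 * (4:ℚ)^k * ((k ! : ℚ))^2 := by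
      push_cast
      linear_combination ((4:ℚ)^k*((k ! : ℚ))^2) * h1 + (-(4:ℚ)^k*((k ! : ℚ))^2) * hzQ
        + (((2*k)! : ℚ)) * h5 + (-1) * h4
    have main' := mul_right_cancel₀ (pow_ne_zero 2 n2) main2
    calc ((2*k).choose k : ℚ)/16^k - (-1) * ((m+k).choose (2*k) : ℚ)
        = (((2*k).choose k : ℚ) * (2*k)! + ((m+k).choose (2*k) : ℚ) * ((4:ℚ)^k)^2 * (2*k)!) / (((4:ℚ)^k)^2 * (2*k)!) := by
          rw [h16]
          field_simp
          ring
      _ = (((-z:ℤ):ℚ) * (2*(m:ℚ)+1)^2 * (4:ℚ)^k) / (((4:ℚ)^k)^2 * (2*k)!) := by rw [main']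
      _ = ((-z:ℤ):ℚ) * (2*(m:ℚ)+1)^2 / (4^k * (2*k)!) := by
          field_simp

section PI

variable (p : ℕ) [hp : Fact p.Prime]

/-- p-integrality -/
def PI (x : ℚ) : Prop := x = 0 ∨ 0 ≤ padicValRat p x

lemma PI.add {x y : ℚ} (hx : PI p x) (hy : PI p y) : PI p (x + y) := by
  rcases hx with rfl | hx
  · simpa using hy
  rcases hy with rfl | hy
  · rw [add_zero]; exact Or.inr hx
  rcases eq_or_ne (x + y) 0 with h0 | h0
  · exact Or.inl h0
  right
  have := padicValRat.min_le_padicValRat_add (p := p) (q := x) (r := y) h0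
  refine le_trans ?_ this
  simp [le_min_iff, hx, hy]

lemma PI.mul {x y : ℚ} (hx : PI p x) (hy : PI p y) : PI p (x * y) := by
  rcases hx with rfl | hx
  · simp [PI]
  rcases hy with rfl | hy
  · simp [PI]
  rcases eq_or_ne x 0 with rfl | hx0
  · simp [PI]
  rcases eq_or_ne y 0 with rfl | hy0
  · simp [PI]
  right
  rw [padicValRat.mul hx0 hy0]
  positivity

lemma PI.sum {s : Finset ℕ} {f : ℕ → ℚ} (h : ∀ i ∈ s, PI p (f i)) :
    PI p (∑ i ∈ s, f i) := by
  classical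
  induction s using Finset.induction with
  | empty => simp [PI]
  | @insert a s' hx ih =>
    rw [Finset.sum_insert hx]
    exact PI.add p (h a (Finset.mem_insert_self a s'))
      (ih fun i hi => h i (Finset.mem_insert_of_mem hi))

lemma PI.int (z : ℤ) : PI p ((z:ℚ)) := by
  rcases eq_or_ne z 0 with rfl | hz
  · simp [PI]
  right
  rw [padicValRat.of_int]
  positivity

lemma val_nat_eq_zero {n : ℕ} (hn : ¬ p ∣ n) (h0 : n ≠ 0) : padicValRat p (n:ℚ) = 0 := by
  have h1 : ((n:ℤ):ℚ) = (n:ℚ) := by push_cast; rfl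
  have h2 : padicValInt p (n:ℤ) = 0 := by
    simp [padicValInt, padicValNat.eq_zero_of_not_dvd hn]
  rw [← h1, padicValRat.of_int, h2]
  rfl

lemma PI.div_nat {x : ℚ} (hx : PI p x) {n : ℕ} (hn : ¬ p ∣ n) : PI p (x / n) := by
  have h0 : n ≠ 0 := by rintro rfl; exact hn (dvd_zero p)
  rcases hx with rfl | hx
  · simp [PI]
  rcases eq_or_ne x 0 with rfl | hx0
  · simp [PI]
  right
  rw [padicValRat.div hx0 (by exact_mod_cast Nat.cast_ne_zero.mpr h0),
      val_nat_eq_zero p hn h0]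
  omega

end PI

theorem stmt16 (p : ℕ) (hp : p.Prime) (hodd : Odd p) (t : ℚ)
    (hnum : ¬ (p : ℤ) ∣ t.num) (hden : ¬ (p : ℤ) ∣ (t.den : ℤ)) :
    pcong p 2
      (∑ k ∈ Finset.range ((p - 1) / 2),
        (Nat.choose (2 * k) k : ℚ) / (2 * (k : ℚ) + 1) ^ 2 * (t / 4) ^ (2 * k))
      ((-1 : ℚ) ^ ((p - 1) / 2) * (lucasV t p - t ^ p) / (t * (p : ℚ) ^ 2)
        + (2 / (t * p)) *
          ∑ k ∈ Finset.range ((p - 1) / 2),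
            (-1 : ℚ) ^ k * lucasV t (2 * k + 1) / (2 * (k : ℚ) + 1)) := by
  haveI : Fact p.Prime := ⟨hp⟩
  obtain ⟨m, hm⟩ : ∃ m, p = 2*m+1 := by
    obtain ⟨m, hm⟩ := hodd; exact ⟨m, by omega⟩
  have hm2 : (p - 1) / 2 = m := by omega
  have ht0 : t ≠ 0 := by
    intro h
    exact hnum (by simp [h])
  have htnum : t.num ≠ 0 := Rat.num_ne_zero.mpr ht0
  have hpQ : (p:ℚ) = 2*(m:ℚ)+1 := by rw [hm]; push_cast; ring
  have hpQ0 : (p:ℚ) ≠ 0 := by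
    rw [hpQ]; positivity
  rw [hm2]
  set SS : ℚ := ∑ k ∈ range m, (-1:ℚ)^k * ((m+k).choose (2*k) : ℚ) * t^(2*k) / (2*(k:ℚ)+1)^2 with hSS
  -- Step A : the RHS equals SS
  have hS1 : ∑ k ∈ range m, (-1:ℚ)^k * ((m+k).choose (2*k) : ℚ) * t^(2*k+1) / (2*(k:ℚ)+1)^2
      = t * SS := by
    rw [hSS, Finset.mul_sum]
    refine Finset.sum_congr rfl fun k _ => ?_
    rw [pow_succ]
    ring
  have hI := identityI m t
  rw [hS1] at hI
  have hRHSeq : (-1 : ℚ) ^ m * (lucasV t p - t ^ p) / (t * (p : ℚ) ^ 2)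
        + (2 / (t * p)) * ∑ k ∈ Finset.range m,
            (-1 : ℚ) ^ k * lucasV t (2 * k + 1) / (2 * (k : ℚ) + 1) = SS := by
    rw [hm, show (((2*m+1 : ℕ)):ℚ) = 2*(m:ℚ)+1 by push_cast; ring]
    have hP : (2*(m:ℚ)+1) ≠ 0 := by positivity
    have key : (-1:ℚ)^m * (lucasV t (2*m+1) - t^(2*m+1)) = (2*(m:ℚ)+1)^2 * (t * SS)
        - 2*(2*(m:ℚ)+1) * ∑ k ∈ range m, (-1:ℚ)^k * lucasV t (2*k+1) / (2*(k:ℚ)+1) := by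
      linear_combination (-1:ℚ) * hI
    rw [key]
    field_simp
    ring
  rw [hRHSeq]
  -- Step B : difference of the two sides
  have hzall : ∀ k, ∃ z : ℤ, k < m →
      ((2*k).choose k : ℚ)/16^k - (-1)^k * ((m+k).choose (2*k) : ℚ)
        = (z:ℚ) * (2*(m:ℚ)+1)^2 / (4^k * (2*k)!) := by
    intro k
    by_cases hk : k < m
    · obtain ⟨z, hz⟩ := coeff_diff m k hk
      exact ⟨z, fun _ => hz⟩
    · exact ⟨0, fun h => absurd h hk⟩
  choose z hz using hzall
  have hdiff : (∑ k ∈ Finset.range m,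
        (Nat.choose (2 * k) k : ℚ) / (2 * (k : ℚ) + 1) ^ 2 * (t / 4) ^ (2 * k)) - SS
      = (p:ℚ)^2 * ∑ k ∈ range m,
          ((z k : ℚ) / (((4^k * (2*k)! : ℕ)) : ℚ)) * (t^(2*k) / ((((2*k+1)^2 : ℕ)) : ℚ)) := by
    rw [hSS, Finset.mul_sum, ← Finset.sum_sub_distrib]
    refine Finset.sum_congr rfl fun k hk => ?_
    simp only [Finset.mem_range] at hk
    have hzk := hz k hk
    have expand : (t/4)^(2*k) = t^(2*k)/16^k := by
      rw [div_pow, show (4:ℚ)^(2*k) = 16^k by rw [pow_mul]; norm_num]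
    have c1 : (((4^k * (2*k)! : ℕ)) : ℚ) = 4^k * ((2*k)! : ℚ) := by push_cast; ring
    have c2 : ((((2*k+1)^2 : ℕ)) : ℚ) = (2*(k:ℚ)+1)^2 := by push_cast; ring
    rw [expand, c1, c2, hpQ]
    linear_combination (t^(2*k) / (2*(k:ℚ)+1)^2) * hzk
  -- p does not divide the denominators
  have hDnd1 : ∀ k, k < m → ¬ p ∣ (4^k * (2*k)!) := by
    intro k hk hdvd
    rcases (Nat.Prime.dvd_mul hp).mp hdvd with h | h
    · have h4 : (4:ℕ)^k = 2^(2*k) := by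
        rw [pow_mul]
        norm_num
      have := hp.dvd_of_dvd_pow (h4 ▸ h)
      have := Nat.le_of_dvd (by norm_num) this
      omega
    · have := (Nat.Prime.dvd_factorial hp).mp h
      omega
  have hDnd2 : ∀ k, k < m → ¬ p ∣ ((2*k+1)^2) := by
    intro k hk hdvd
    have := hp.dvd_of_dvd_pow hdvd
    have := Nat.le_of_dvd (by omega) this
    omega
  -- p-adic valuation of t is 0
  have hvt : padicValRat p t = 0 := by
    have hd : ¬ p ∣ t.den := by
      intro h
      exact hden (Int.natCast_dvd_natCast.mpr h)
    unfold padicValRat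
    rw [padicValInt.eq_zero_of_not_dvd hnum, padicValNat.eq_zero_of_not_dvd hd]
    rfl
  have hPIU : PI p (∑ k ∈ range m,
      ((z k : ℚ) / (((4^k * (2*k)! : ℕ)) : ℚ)) * (t^(2*k) / ((((2*k+1)^2 : ℕ)) : ℚ))) := by
    refine PI.sum p fun k hk => ?_
    simp only [Finset.mem_range] at hk
    refine PI.mul p (PI.div_nat p (PI.int p _) (hDnd1 k hk)) (PI.div_nat p ?_ (hDnd2 k hk))
    right
    rw [padicValRat.pow (q := t), hvt]
    simp
  -- conclude
  rcases eq_or_ne ((∑ k ∈ Finset.range m,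
        (Nat.choose (2 * k) k : ℚ) / (2 * (k : ℚ) + 1) ^ 2 * (t / 4) ^ (2 * k)) - SS) 0 with h0 | h0
  · left
    linarith [h0]
  · right
    rw [hdiff] at h0 ⊢
    have hU0 : (∑ k ∈ range m,
        ((z k : ℚ) / (((4^k * (2*k)! : ℕ)) : ℚ)) * (t^(2*k) / ((((2*k+1)^2 : ℕ)) : ℚ))) ≠ 0 := by
      intro h
      exact h0 (by rw [h, mul_zero])
    rw [padicValRat.mul (by positivity) hU0, padicValRat.pow (q := (p:ℚ)), padicValRat.self hp.one_lt]
    have := hPIU.resolve_left hU0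
    omega
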